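/- Let N ≥ 1 and let h_1, …, h_N be unit vectors in ℝ^d, and let t > 0 and Z > 0 be real constants. Define the von Mises–Fisher kernel density estimate p̂(x) = (1/(N·Z)) · ∑_{j=1}^N exp(2t·⟨x, h_j⟩) and the resubstitution entropy estimator Ĥ = -(1/N) · ∑_{i=1}^N log p̂(h_i). Then the Gaussian-kernel uniformity loss R = (1/N²) · ∑_{i=1}^N ∑_{j=1}^N exp(-t·‖h_i − h_j‖²) satisfies log R ≥ log Z − 2t − Ĥ, equivalently R ≥ Z · e^{−2t} · e^{−Ĥ}. In particular a small uniformity loss forces a large entropy estimator: Ĥ ≥ log Z − 2t − log R. -/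

import Mathlib

open scoped RealInnerProductSpace BigOperators

/-- the Gaussian-kernel uniformity loss `R` satisfies
`log R ≥ log Z - 2t - Ĥ`, equivalently `R ≥ Z·e^{-2t}·e^{-Ĥ}`, and in
particular `Ĥ ≥ log Z - 2t - log R`. -/
theorem stmt_1 {d N : ℕ} (hN : 1 ≤ N)
    (h : Fin N → EuclideanSpace ℝ (Fin d))
    (hunit : ∀ i, ‖h i‖ = 1)
    (t Z : ℝ) (ht : 0 < t) (hZ : 0 < Z) :
    let phat : EuclideanSpace ℝ (Fin d) → ℝ :=
      fun x => (1 / ((N : ℝ) * Z)) * ∑ j, Real.exp (2 * t * ⟪x, h j⟫)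
    let Hhat : ℝ := -(1 / (N : ℝ)) * ∑ i, Real.log (phat (h i))
    let R : ℝ := (1 / (N : ℝ) ^ 2) * ∑ i, ∑ j, Real.exp (-t * ‖h i - h j‖ ^ 2)
    Real.log R ≥ Real.log Z - 2 * t - Hhat ∧
    R ≥ Z * Real.exp (-(2 * t)) * Real.exp (-Hhat) ∧
    Hhat ≥ Real.log Z - 2 * t - Real.log R := by
  intro phat Hhat R
  have hNpos : (0:ℝ) < (N:ℝ) := by exact_mod_cast hN
  have hNne : (N:ℝ) ≠ 0 := ne_of_gt hNpos
  have hp : ∀ i, 0 < phat (h i) := by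
    intro i
    apply mul_pos (by positivity)
    exact Finset.sum_pos (fun j _ => Real.exp_pos _) ⟨⟨0, hN⟩, Finset.mem_univ _⟩
  -- rewrite R
  have hterm : ∀ i j : Fin N, Real.exp (-t * ‖h i - h j‖ ^ 2)
      = Real.exp (-(2*t)) * Real.exp (2 * t * ⟪h i, h j⟫) := by
    intro i j
    rw [← Real.exp_add]
    congr 1
    have hsq : ‖h i - h j‖ ^ 2 = 2 - 2 * ⟪h i, h j⟫ := by
      rw [@norm_sub_sq_real, hunit i, hunit j]; ring
    rw [hsq]; ring
  have hsum : ∀ i : Fin N, ∑ j, Real.exp (2 * t * ⟪h i, h j⟫)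
      = (N:ℝ) * Z * phat (h i) := by
    intro i
    simp only [phat]
    field_simp
  have hRS : R = Z * Real.exp (-(2*t)) * ((1/(N:ℝ)) * ∑ i, phat (h i)) := by
    simp only [R]
    have : ∀ i : Fin N, ∑ j, Real.exp (-t * ‖h i - h j‖ ^ 2)
        = Real.exp (-(2*t)) * ((N:ℝ) * Z * phat (h i)) := by
      intro i
      rw [Finset.sum_congr rfl (fun j _ => hterm i j), ← Finset.mul_sum, hsum i]
    rw [Finset.sum_congr rfl (fun i _ => this i)]
    have e1 : ∑ i, Real.exp (-(2*t)) * ((N:ℝ) * Z * phat (h i))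
        = (Real.exp (-(2*t)) * ((N:ℝ) * Z)) * ∑ i, phat (h i) := by
      rw [Finset.mul_sum]
      exact Finset.sum_congr rfl (fun i _ => by ring)
    rw [e1]
    generalize (∑ i, phat (h i)) = S
    field_simp
  -- Jensen
  have hjensen : Real.exp (-Hhat) ≤ (1/(N:ℝ)) * ∑ i, phat (h i) := by
    have hw1 : ∑ _i : Fin N, (1/(N:ℝ)) = 1 := by
      simp [Finset.sum_const, Finset.card_univ]
      field_simp
    have := convexOn_exp.map_sum_le (t := Finset.univ)
      (w := fun _ : Fin N => 1/(N:ℝ)) (p := fun i => Real.log (phat (h i)))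
      (fun i _ => by positivity) hw1 (fun i _ => Set.mem_univ _)
    have hL : -Hhat = ∑ i, (1/(N:ℝ)) • Real.log (phat (h i)) := by
      simp only [Hhat, smul_eq_mul, ← Finset.mul_sum]
      ring
    rw [hL]
    calc Real.exp (∑ i, (1/(N:ℝ)) • Real.log (phat (h i)))
        ≤ ∑ i, (1/(N:ℝ)) * Real.exp (Real.log (phat (h i))) := this
      _ = (1/(N:ℝ)) * ∑ i, phat (h i) := by
          rw [← Finset.mul_sum]
          congr 1
          exact Finset.sum_congr rfl (fun i _ => Real.exp_log (hp i))
  have h2 : R ≥ Z * Real.exp (-(2 * t)) * Real.exp (-Hhat) := by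
    rw [hRS]
    apply mul_le_mul_of_nonneg_left hjensen (by positivity)
  have hRpos : 0 < R := by
    rw [hRS]
    have : 0 < ∑ i, phat (h i) :=
      Finset.sum_pos (fun i _ => hp i) ⟨⟨0, hN⟩, Finset.mem_univ _⟩
    exact mul_pos (mul_pos hZ (Real.exp_pos _)) (mul_pos (one_div_pos.mpr hNpos) this)
  have h1 : Real.log R ≥ Real.log Z - 2 * t - Hhat := by
    have := Real.log_le_log (by positivity) h2
    rw [Real.log_mul (by positivity) (Real.exp_ne_zero _),
      Real.log_mul (ne_of_gt hZ) (Real.exp_ne_zero _), Real.log_exp,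
      Real.log_exp] at this
    linarith
  exact ⟨h1, h2, by linarith⟩
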